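/- Consider any play of the erase-repetition game over a set S in which every symbol appended by Ann differs from each of the last three symbols of the current sequence before her move (or from all symbols of the current sequence if it has fewer than three terms), while Ben plays arbitrarily. Then at no move of this play does a repetition of size 2 or of size 3 occur; moreover, every repetition created by a move of Ann has size at least 4 (so all repetitions occurring in the play have size 1 or size at least 4, and those of size 1 are created only by Ben). -/

import Mathlib

/-- The last `2*h` terms of `l` form a repetition of size `h` (`h ≥ 1`),
i.e. `l` has a suffix of the form `x₁…x_h x₁…x_h`. -/
def SuffixRep {S : Type*} (l : List S) (h : ℕ) : Prop :=
  1 ≤ h ∧ 2 * h ≤ l.length ∧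
    (l.drop (l.length - 2 * h)).take h = l.drop (l.length - h)

instance {S : Type*} [DecidableEq S] (l : List S) (h : ℕ) :
    Decidable (SuffixRep l h) := by
  unfold SuffixRep; infer_instance

/-- The size of the repetition created by appending the last symbol of `l`,
i.e. the smallest `h ≥ 1` such that the last `2*h` terms of `l` form a
repetition of size `h` (`0` if there is no repeated suffix). -/
def minRep {S : Type*} [DecidableEq S] (l : List S) : ℕ :=
  ((((List.range (l.length + 1)).filter fun h => decide (SuffixRep l h))).head?).getD 0

/-- Erase the second half of the shortest repeated suffix of `l`
(if `l` has no repeated suffix, `l` is left unchanged). -/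
def eraseRep {S : Type*} [DecidableEq S] (l : List S) : List S :=
  l.take (l.length - minRep l)

/-- The current sequence after `j` moves of a play of the erase-repetition game
in which the symbol appended at the `(j+1)`-st move is `x j`: each appended
symbol creating a repetition causes the second half of the shortest repeated
suffix to be erased immediately. -/
def statesOf {S : Type*} [DecidableEq S] (x : ℕ → S) : ℕ → List S
  | 0 => []
  | j + 1 => eraseRep (statesOf x j ++ [x j])

lemma rep_pointwise {S : Type*} {l : List S} {h : ℕ} (hr : SuffixRep l h) :
    ∀ i, i < h → l.reverse[i]? = l.reverse[i + h]? := by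
  obtain ⟨h1, h2, heq⟩ := hr
  intro i hi
  have e := congrArg (fun t : List S => t[h - 1 - i]?) heq
  simp only [List.getElem?_take, List.getElem?_drop] at e
  rw [if_pos (by omega)] at e
  rw [List.getElem?_reverse (by omega : i < l.length),
      List.getElem?_reverse (by omega : i + h < l.length)]
  rw [show l.length - 2 * h + (h - 1 - i) = l.length - 1 - (i + h) by omega,
      show l.length - h + (h - 1 - i) = l.length - 1 - i by omega] at e
  exact e.symm

lemma minRep_spec {S : Type*} [DecidableEq S] (l : List S) :
    minRep l = 0 ∨ SuffixRep l (minRep l) := by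
  unfold minRep
  cases hl : (List.range (l.length + 1)).filter (fun h => decide (SuffixRep l h)) with
  | nil => left; rfl
  | cons a as =>
    right
    have ha : a ∈ (List.range (l.length + 1)).filter (fun h => decide (SuffixRep l h)) :=
      hl ▸ List.mem_cons_self (a := a) (l := as)
    have := List.of_mem_filter ha
    simpa using this

lemma rev_concat {S : Type*} (s : List S) (a : S) :
    (s ++ [a]).reverse = a :: s.reverse := by simp

lemma ann_big {S : Type*} [DecidableEq S] (s : List S) (a : S)
    (ha : ∀ k, k < 3 → s.reverse[k]? ≠ some a) :
    minRep (s ++ [a]) = 0 ∨ 4 ≤ minRep (s ++ [a]) := by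
  rcases minRep_spec (s ++ [a]) with h0 | hr
  · exact Or.inl h0
  right
  set m := minRep (s ++ [a]) with hm
  by_contra hlt
  push_neg at hlt
  have h1 := hr.1
  have hp := rep_pointwise hr 0 (by omega)
  rw [rev_concat] at hp
  rw [show (0 : ℕ) + m = (m - 1) + 1 by omega] at hp
  rw [List.getElem?_cons_succ, List.getElem?_cons_zero] at hp
  exact ha (m - 1) (by omega) hp.symm

lemma after_state {S : Type*} [DecidableEq S] (s : List S) (a : S)
    (ha : ∀ k, k < 3 → s.reverse[k]? ≠ some a) :
    ∀ k, k < 4 → (eraseRep (s ++ [a])).reverse[k]? = (a :: s.reverse)[k]? := by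
  intro k hk
  rcases minRep_spec (s ++ [a]) with h0 | hr
  · unfold eraseRep
    rw [h0, Nat.sub_zero, List.take_length, rev_concat]
  · have h4 : 4 ≤ minRep (s ++ [a]) := by
      rcases ann_big s a ha with h0 | h4
      · exact absurd h0 (by intro h; rw [h] at hr; exact absurd hr.1 (by norm_num))
      · exact h4
    set l := s ++ [a] with hl
    set m := minRep l with hm
    have h2 : 2 * m ≤ l.length := hr.2.1
    have hts : (eraseRep l).length = l.length - m := by
      unfold eraseRep; rw [List.length_take]; omega
    have hklt : k < (eraseRep l).length := by omega
    have e1 : (eraseRep l).reverse[k]? = (eraseRep l)[(l.length - m) - 1 - k]? := by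
      rw [List.getElem?_reverse hklt, hts]
    have e2 : (eraseRep l)[(l.length - m) - 1 - k]? = l[(l.length - m) - 1 - k]? := by
      unfold eraseRep
      rw [← hm, List.getElem?_take, if_pos (by omega)]
    have e3 : l.reverse[k + m]? = l[(l.length - m) - 1 - k]? := by
      rw [List.getElem?_reverse (by omega : k + m < l.length)]
      congr 1
      omega
    have e4 : l.reverse[k]? = (a :: s.reverse)[k]? := by rw [hl, rev_concat]
    have hp := rep_pointwise hr k (by omega)
    rw [e1, e2, ← e3, ← hp, e4]

lemma inv_after {S : Type*} [DecidableEq S] (s : List S) (a : S)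
    (ha : ∀ k, k < 3 → s.reverse[k]? ≠ some a) :
    ∀ k, 1 ≤ k → k < 4 →
      (eraseRep (s ++ [a])).reverse[k]? ≠ (eraseRep (s ++ [a])).reverse[0]? := by
  intro k h1 h4
  rw [after_state s a ha k h4, after_state s a ha 0 (by omega)]
  rw [show k = (k - 1) + 1 by omega, List.getElem?_cons_succ, List.getElem?_cons_zero]
  exact ha (k - 1) (by omega)

lemma ben_ok {S : Type*} [DecidableEq S] (t : List S) (y : S)
    (hinv : ∀ k, 1 ≤ k → k < 4 → t.reverse[k]? ≠ t.reverse[0]?) (h : ℕ)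
    (hh : h = 2 ∨ h = 3) : minRep (t ++ [y]) ≠ h := by
  intro hm
  rcases minRep_spec (t ++ [y]) with h0 | hr
  · omega
  rw [hm] at hr
  have hp := rep_pointwise hr 1 (by omega)
  rw [rev_concat] at hp
  rw [show (1 : ℕ) = 0 + 1 from rfl, List.getElem?_cons_succ] at hp
  rw [show 0 + 1 + h = h + 1 by omega, List.getElem?_cons_succ] at hp
  exact hinv h (by omega) (by omega) hp.symm

theorem erase_game_ann_avoids_last_three {S : Type*} [DecidableEq S] (x : ℕ → S)
    (hAnn : ∀ j, j % 2 = 0 → x j ∉ (statesOf x j).reverse.take 3) :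
    (∀ j, minRep (statesOf x j ++ [x j]) ≠ 2 ∧ minRep (statesOf x j ++ [x j]) ≠ 3) ∧
    (∀ j, j % 2 = 0 →
      minRep (statesOf x j ++ [x j]) = 0 ∨ 4 ≤ minRep (statesOf x j ++ [x j])) := by
  have hA : ∀ j, j % 2 = 0 → ∀ k, k < 3 →
      (statesOf x j).reverse[k]? ≠ some (x j) := by
    intro j hj k hk heq
    apply hAnn j hj
    have : ((statesOf x j).reverse.take 3)[k]? = some (x j) := by
      rw [List.getElem?_take, if_pos hk]; exact heq
    exact List.mem_of_getElem? this
  have part2 : ∀ j, j % 2 = 0 →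
      minRep (statesOf x j ++ [x j]) = 0 ∨ 4 ≤ minRep (statesOf x j ++ [x j]) :=
    fun j hj => ann_big _ _ (hA j hj)
  refine ⟨fun j => ?_, part2⟩
  by_cases hj : j % 2 = 0
  · rcases part2 j hj with h | h <;> omega
  · obtain ⟨k, rfl⟩ : ∃ k, j = k + 1 := ⟨j - 1, by omega⟩
    have hk : k % 2 = 0 := by omega
    have hst : statesOf x (k + 1) = eraseRep (statesOf x k ++ [x k]) := rfl
    have hinv : ∀ m, 1 ≤ m → m < 4 →
        (statesOf x (k + 1)).reverse[m]? ≠ (statesOf x (k + 1)).reverse[0]? := by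
      rw [hst]; exact inv_after (statesOf x k) (x k) (hA k hk)
    exact ⟨ben_ok _ _ hinv 2 (Or.inl rfl), ben_ok _ _ hinv 3 (Or.inr rfl)⟩
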